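/- Let a, b, t_1, t_2, … be commuting formal variables. Then in the ring of formal power series over ℤ one has the identity Σ_{p,q ≥ 0 even} Σ_{λ ⊢ p+q} #syd_CII(λ;p,q) · a^p b^q t_λ = ∏_{k=1}^∞ (1 − a^{2k−2} b^{2k} t_{2k−1}^2)^{−1} · (1 − a^{2k} b^{2k−2} t_{2k−1}^2)^{−1} · (1 − a^{2k} b^{2k} t_{2k}^2)^{−1}, where t_λ = t_1^{m_1} t_2^{m_2} ⋯ for λ = [1^{m_1} · 2^{m_2} ⋯] (m_i the multiplicity of i in λ), and #syd_CII(λ;p,q) = 0 unless every part of λ has even multiplicity. Equivalently: for all even p, q ≥ 0 and every partition λ of p+q, #syd_CII(λ;p,q) equals the coefficient of a^p b^q t_λ in the infinite product. -/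

import Mathlib

open Finset

/-- A signed Young diagram of shape `lam` and signature `(p, q)`, encoded by the
function `f` sending each part length `i` to the number of rows of length `i`
whose leading sign is `+`. -/
structure SYD {n : ℕ} (lam : Nat.Partition n) (p q : ℕ) : Type where
  f : ℕ → ℕ
  le_mult : ∀ i, f i ≤ Multiset.count i lam.parts
  plus_eq : ∑ i ∈ lam.parts.toFinset,
      (f i * ((i + 1) / 2) + (Multiset.count i lam.parts - f i) * (i / 2)) = p
  minus_eq : ∑ i ∈ lam.parts.toFinset,
      (f i * (i / 2) + (Multiset.count i lam.parts - f i) * ((i + 1) / 2)) = q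

abbrev Var : Type := ℕ ⊕ Bool

noncomputable def va : MvPowerSeries Var ℤ := MvPowerSeries.X (Sum.inr true)
noncomputable def vb : MvPowerSeries Var ℤ := MvPowerSeries.X (Sum.inr false)
noncomputable def vt (i : ℕ) : MvPowerSeries Var ℤ := MvPowerSeries.X (Sum.inl i)

noncomputable def geomInv (φ : MvPowerSeries Var ℤ) : MvPowerSeries Var ℤ :=
  MvPowerSeries.invOfUnit (1 - φ) 1

noncomputable def degOf {n : ℕ} (lam : Nat.Partition n) (p q : ℕ) : Var →₀ ℕ :=
  Finsupp.single (Sum.inr true) p + Finsupp.single (Sum.inr false) q +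
    ∑ i ∈ lam.parts.toFinset, Finsupp.single (Sum.inl i) (Multiset.count i lam.parts)

open MvPowerSeries Classical


noncomputable def gs (e : Var →₀ ℕ) : MvPowerSeries Var ℤ :=
  fun d => if ∃ n : ℕ, d = n • e then 1 else 0

lemma coeff_gs (e d : Var →₀ ℕ) :
    MvPowerSeries.coeff (R := ℤ) d (gs e) = if ∃ n : ℕ, d = n • e then 1 else 0 := rfl

lemma one_sub_mul_gs (e : Var →₀ ℕ) (he : e ≠ 0) :
    (1 - MvPowerSeries.monomial (R := ℤ) e 1) * gs e = 1 := by
  ext d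
  rw [sub_mul, one_mul, map_sub, coeff_monomial_mul, coeff_gs]
  by_cases hd : d = 0
  · subst hd
    rw [if_pos ⟨0, by simp⟩, if_neg (by simpa [le_zero_iff] using he)]
    simp [MvPowerSeries.coeff_one]
  · rw [show (MvPowerSeries.coeff (R := ℤ) d) 1 = 0 by simp [MvPowerSeries.coeff_one, hd]]
    by_cases h : ∃ n : ℕ, d = n • e
    · obtain ⟨n, rfl⟩ := h
      rcases Nat.exists_eq_succ_of_ne_zero (n := n) (by rintro rfl; simp at hd) with ⟨m, rfl⟩
      rw [if_pos ⟨m + 1, rfl⟩, if_pos (by rw [succ_nsmul]; exact le_add_self),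
        coeff_gs, if_pos ⟨m, by rw [succ_nsmul, add_tsub_cancel_right]⟩, one_mul, sub_self]
    · rw [if_neg h]
      split_ifs with hle
      · rw [coeff_gs, if_neg, mul_zero, sub_zero]
        rintro ⟨n, hn⟩
        exact h ⟨n + 1, by rw [succ_nsmul, ← hn, tsub_add_cancel_of_le hle]⟩
      · rw [sub_zero]


lemma geomInv_monomial (e : Var →₀ ℕ) (he : e ≠ 0) :
    geomInv (MvPowerSeries.monomial (R := ℤ) e 1) = gs e := by
  have hc : MvPowerSeries.constantCoeff (σ := Var) (R := ℤ) (1 - MvPowerSeries.monomial (R := ℤ) e 1) = (1 : Units ℤ) := by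
    rw [← MvPowerSeries.coeff_zero_eq_constantCoeff_apply, map_sub,
      MvPowerSeries.coeff_monomial, if_neg (Ne.symm he)]
    simp [MvPowerSeries.coeff_one]
  calc geomInv (MvPowerSeries.monomial (R := ℤ) e 1)
      = geomInv _ * ((1 - MvPowerSeries.monomial (R := ℤ) e 1) * gs e) := by
        rw [one_sub_mul_gs e he, mul_one]
    _ = (MvPowerSeries.invOfUnit (1 - MvPowerSeries.monomial (R := ℤ) e 1) 1 *
          (1 - MvPowerSeries.monomial (R := ℤ) e 1)) * gs e := by rw [geomInv, mul_assoc]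
    _ = gs e := by rw [MvPowerSeries.invOfUnit_mul _ _ hc, one_mul]

/-- The exponent finsupp of the `(k,r)` factor of the product. -/
noncomputable def Ee : ℕ × ℕ → (Var →₀ ℕ)
  | (k, 0) => Finsupp.single (Sum.inr true) (2*k-2) + Finsupp.single (Sum.inr false) (2*k)
      + Finsupp.single (Sum.inl (2*k-1)) 2
  | (k, 1) => Finsupp.single (Sum.inr true) (2*k) + Finsupp.single (Sum.inr false) (2*k-2)
      + Finsupp.single (Sum.inl (2*k-1)) 2
  | (k, 2) => Finsupp.single (Sum.inr true) (2*k) + Finsupp.single (Sum.inr false) (2*k)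
      + Finsupp.single (Sum.inl (2*k)) 2
  | _ => 0

lemma prodX (i j r : ℕ) :
    va ^ i * vb ^ j * vt r ^ 2 = MvPowerSeries.monomial (R := ℤ)
      (Finsupp.single (Sum.inr true) i + Finsupp.single (Sum.inr false) j
        + Finsupp.single (Sum.inl r) 2) 1 := by
  rw [va, vb, vt, MvPowerSeries.X_pow_eq, MvPowerSeries.X_pow_eq, MvPowerSeries.X_pow_eq,
    MvPowerSeries.monomial_mul_monomial, MvPowerSeries.monomial_mul_monomial]
  norm_num

lemma Ee0_inl (k i : ℕ) : Ee (k,0) (Sum.inl i) = if 2*k-1 = i then 2 else 0 := by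
  simp [Ee, Finsupp.single_apply]
lemma Ee1_inl (k i : ℕ) : Ee (k,1) (Sum.inl i) = if 2*k-1 = i then 2 else 0 := by
  simp [Ee, Finsupp.single_apply]
lemma Ee2_inl (k i : ℕ) : Ee (k,2) (Sum.inl i) = if 2*k = i then 2 else 0 := by
  simp [Ee, Finsupp.single_apply]
lemma Ee0_a (k : ℕ) : Ee (k,0) (Sum.inr true) = 2*k-2 := by simp [Ee, Finsupp.single_apply]
lemma Ee1_a (k : ℕ) : Ee (k,1) (Sum.inr true) = 2*k := by simp [Ee, Finsupp.single_apply]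
lemma Ee2_a (k : ℕ) : Ee (k,2) (Sum.inr true) = 2*k := by simp [Ee, Finsupp.single_apply]
lemma Ee0_b (k : ℕ) : Ee (k,0) (Sum.inr false) = 2*k := by simp [Ee, Finsupp.single_apply]
lemma Ee1_b (k : ℕ) : Ee (k,1) (Sum.inr false) = 2*k-2 := by simp [Ee, Finsupp.single_apply]
lemma Ee2_b (k : ℕ) : Ee (k,2) (Sum.inr false) = 2*k := by simp [Ee, Finsupp.single_apply]

lemma Ee0_ne (k : ℕ) : Ee (k,0) ≠ 0 := fun h => by
  simpa [Ee0_inl] using DFunLike.congr_fun h (Sum.inl (2*k-1))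
lemma Ee1_ne (k : ℕ) : Ee (k,1) ≠ 0 := fun h => by
  simpa [Ee1_inl] using DFunLike.congr_fun h (Sum.inl (2*k-1))
lemma Ee2_ne (k : ℕ) : Ee (k,2) ≠ 0 := fun h => by
  simpa [Ee2_inl] using DFunLike.congr_fun h (Sum.inl (2*k))

lemma sum_double (g : ℕ → ℕ) (h0 : g 0 = 0) (N : ℕ) :
    ∑ k ∈ Finset.Icc 1 N, (g (2*k-1) + g (2*k)) = ∑ i ∈ Finset.range (2*N+1), g i := by
  induction N with
  | zero => simp [h0]
  | succ N ih =>
      rw [Finset.sum_Icc_succ_top (by omega), ih,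
        show 2*(N+1)-1 = 2*N+1 by omega, show 2*(N+1) = (2*N+1)+1 by omega]
      conv_rhs => rw [Finset.sum_range_succ, Finset.sum_range_succ]
      ring

lemma count_zero_parts {n : ℕ} (lam : Nat.Partition n) : Multiset.count 0 lam.parts = 0 :=
  Multiset.count_eq_zero_of_notMem (fun h => absurd (lam.parts_pos h) (lt_irrefl 0))

lemma mem_parts_le {n : ℕ} (lam : Nat.Partition n) {i : ℕ} (hi : i ∈ lam.parts) : i ≤ n := by
  have h2 : i + (lam.parts.erase i).sum = n := by
    rw [← Multiset.sum_cons, Multiset.cons_erase hi, lam.parts_sum]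
  omega

lemma sum_parts {n : ℕ} (lam : Nat.Partition n) (N : ℕ) (hN : n ≤ N) (g : ℕ → ℕ)
    (hz : ∀ i, Multiset.count i lam.parts = 0 → g i = 0) :
    ∑ k ∈ Finset.Icc 1 N, (g (2*k-1) + g (2*k)) = ∑ i ∈ lam.parts.toFinset, g i := by
  rw [sum_double g (hz 0 (count_zero_parts lam)) N]
  refine (Finset.sum_subset ?_ ?_).symm
  · intro i hi
    rw [Multiset.mem_toFinset] at hi
    have := mem_parts_le lam hi
    exact Finset.mem_range.2 (by omega)
  · intro i _ hi
    rw [Multiset.mem_toFinset] at hi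
    exact hz i (Multiset.count_eq_zero_of_notMem hi)

def SS (N : ℕ) : Finset (ℕ × ℕ) := Finset.Icc 1 N ×ˢ Finset.range 3

lemma sumS (N : ℕ) (n : ℕ × ℕ → ℕ) (v : Var) :
    (∑ j ∈ SS N, n j • Ee j) v =
      ∑ k ∈ Finset.Icc 1 N,
        (n (k,0) * Ee (k,0) v + n (k,1) * Ee (k,1) v + n (k,2) * Ee (k,2) v) := by
  rw [Finsupp.finset_sum_apply, SS, Finset.sum_product]
  refine Finset.sum_congr rfl fun k _ => ?_
  rw [show (3:ℕ) = 2+1 from rfl, Finset.sum_range_succ, Finset.sum_range_succ,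
    Finset.sum_range_one]
  simp [Finsupp.smul_apply, mul_comm]

lemma sumS_a (N : ℕ) (n : ℕ × ℕ → ℕ) :
    (∑ j ∈ SS N, n j • Ee j) (Sum.inr true) =
      ∑ k ∈ Finset.Icc 1 N, (n (k,0) * (2*k-2) + n (k,1) * (2*k) + n (k,2) * (2*k)) := by
  rw [sumS]; exact Finset.sum_congr rfl fun k _ => by rw [Ee0_a, Ee1_a, Ee2_a]

lemma sumS_b (N : ℕ) (n : ℕ × ℕ → ℕ) :
    (∑ j ∈ SS N, n j • Ee j) (Sum.inr false) =
      ∑ k ∈ Finset.Icc 1 N, (n (k,0) * (2*k) + n (k,1) * (2*k-2) + n (k,2) * (2*k)) := by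
  rw [sumS]; exact Finset.sum_congr rfl fun k _ => by rw [Ee0_b, Ee1_b, Ee2_b]

lemma sumS_inl (N : ℕ) (n : ℕ × ℕ → ℕ) (i : ℕ) :
    (∑ j ∈ SS N, n j • Ee j) (Sum.inl i) =
      ∑ k ∈ Finset.Icc 1 N,
        ((if 2*k-1 = i then 2*(n (k,0) + n (k,1)) else 0) +
          (if 2*k = i then 2*(n (k,2)) else 0)) := by
  rw [sumS]
  refine Finset.sum_congr rfl fun k _ => ?_
  rw [Ee0_inl, Ee1_inl, Ee2_inl]
  split_ifs <;> ring

lemma sumS_inl_odd (N : ℕ) (n : ℕ × ℕ → ℕ) (k : ℕ) (hk1 : 1 ≤ k) (hk2 : k ≤ N) :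
    (∑ j ∈ SS N, n j • Ee j) (Sum.inl (2*k-1)) = 2*(n (k,0) + n (k,1)) := by
  rw [sumS_inl]
  have : ∀ k' ∈ Finset.Icc 1 N,
      ((if 2*k'-1 = 2*k-1 then 2*(n (k',0) + n (k',1)) else 0) +
        (if 2*k' = 2*k-1 then 2*(n (k',2)) else 0)) =
      (if k' = k then 2*(n (k',0) + n (k',1)) else 0) := by
    intro k' hk'
    rw [Finset.mem_Icc] at hk'
    have h2 : ¬(2*k' = 2*k-1) := by omega
    rw [if_neg h2, add_zero]
    congr 1
    simp only [eq_iff_iff]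
    omega
  rw [Finset.sum_congr rfl this, Finset.sum_ite_eq' (Finset.Icc 1 N)]
  rw [if_pos (Finset.mem_Icc.2 ⟨hk1, hk2⟩)]

lemma sumS_inl_even (N : ℕ) (n : ℕ × ℕ → ℕ) (k : ℕ) (hk1 : 1 ≤ k) (hk2 : k ≤ N) :
    (∑ j ∈ SS N, n j • Ee j) (Sum.inl (2*k)) = 2*(n (k,2)) := by
  rw [sumS_inl]
  have : ∀ k' ∈ Finset.Icc 1 N,
      ((if 2*k'-1 = 2*k then 2*(n (k',0) + n (k',1)) else 0) +
        (if 2*k' = 2*k then 2*(n (k',2)) else 0)) =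
      (if k' = k then 2*(n (k',2)) else 0) := by
    intro k' hk'
    rw [Finset.mem_Icc] at hk'
    have h2 : ¬(2*k'-1 = 2*k) := by omega
    rw [if_neg h2, zero_add]
    congr 1
    simp only [eq_iff_iff]
    omega
  rw [Finset.sum_congr rfl this, Finset.sum_ite_eq' (Finset.Icc 1 N)]
  rw [if_pos (Finset.mem_Icc.2 ⟨hk1, hk2⟩)]

lemma degOf_inl {n : ℕ} (lam : Nat.Partition n) (p q i : ℕ) :
    degOf lam p q (Sum.inl i) = Multiset.count i lam.parts := by
  rw [degOf, Finsupp.add_apply, Finsupp.add_apply, Finsupp.finset_sum_apply]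
  rw [Finsupp.single_apply, Finsupp.single_apply, if_neg (by simp), if_neg (by simp)]
  have : ∀ i' ∈ lam.parts.toFinset,
      (Finsupp.single (Sum.inl i' : Var) (Multiset.count i' lam.parts)) (Sum.inl i) =
      if i' = i then Multiset.count i' lam.parts else 0 := by
    intro i' _
    rw [Finsupp.single_apply]
    simp [Sum.inl.injEq]
  rw [Finset.sum_congr rfl this, Finset.sum_ite_eq' lam.parts.toFinset]
  split_ifs with h
  · simp
  · rw [Multiset.mem_toFinset] at h
    simp [Multiset.count_eq_zero_of_notMem h]

lemma degOf_a {n : ℕ} (lam : Nat.Partition n) (p q : ℕ) :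
    degOf lam p q (Sum.inr true) = p := by
  rw [degOf, Finsupp.add_apply, Finsupp.add_apply, Finsupp.finset_sum_apply]
  rw [Finsupp.single_apply, Finsupp.single_apply]
  simp [Finsupp.single_apply]

lemma degOf_b {n : ℕ} (lam : Nat.Partition n) (p q : ℕ) :
    degOf lam p q (Sum.inr false) = q := by
  rw [degOf, Finsupp.add_apply, Finsupp.add_apply, Finsupp.finset_sum_apply]
  simp [Finsupp.single_apply]

lemma arith_t (F M : ℕ) (h1 : F ≤ M) (h2 : M % 2 = 0) (h3 : F % 2 = 0) :
    2*((M-F)/2 + F/2) = M := by omega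

lemma arith_a (k F M F2 M2 : ℕ) (hk : 1 ≤ k) (h1 : F ≤ M) (h2 : M % 2 = 0) (h3 : F % 2 = 0)
    (h4 : M2 = 2*F2) :
    ((M-F)/2)*(2*k-2) + (F/2)*(2*k) + (M2/2)*(2*k)
      = (F*((2*k-1+1)/2) + (M-F)*((2*k-1)/2)) + (F2*((2*k+1)/2) + (M2-F2)*((2*k)/2)) := by
  obtain ⟨k', rfl⟩ : ∃ k', k = k'+1 := ⟨k-1, by omega⟩
  obtain ⟨c, rfl⟩ : ∃ c, F = 2*c := ⟨F/2, by omega⟩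
  obtain ⟨u, rfl⟩ : ∃ u, M = 2*c + 2*u := ⟨(M - 2*c)/2, by omega⟩
  subst h4
  rw [show (2*c+2*u) - 2*c = 2*u by omega, show 2*u/2 = u by omega,
    show 2*c/2 = c by omega, show 2*F2/2 = F2 by omega, show 2*F2 - F2 = F2 by omega,
    show (2*(k'+1)-1+1)/2 = k'+1 by omega, show (2*(k'+1)-1)/2 = k' by omega,
    show (2*(k'+1)+1)/2 = k'+1 by omega, show (2*(k'+1))/2 = k'+1 by omega,
    show 2*(k'+1)-2 = 2*k' by omega]
  ring

lemma arith_b (k F M F2 M2 : ℕ) (hk : 1 ≤ k) (h1 : F ≤ M) (h2 : M % 2 = 0) (h3 : F % 2 = 0)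
    (h4 : M2 = 2*F2) :
    ((M-F)/2)*(2*k) + (F/2)*(2*k-2) + (M2/2)*(2*k)
      = (F*((2*k-1)/2) + (M-F)*((2*k-1+1)/2)) + (F2*((2*k)/2) + (M2-F2)*((2*k+1)/2)) := by
  obtain ⟨k', rfl⟩ : ∃ k', k = k'+1 := ⟨k-1, by omega⟩
  obtain ⟨c, rfl⟩ : ∃ c, F = 2*c := ⟨F/2, by omega⟩
  obtain ⟨u, rfl⟩ : ∃ u, M = 2*c + 2*u := ⟨(M - 2*c)/2, by omega⟩
  subst h4
  rw [show (2*c+2*u) - 2*c = 2*u by omega, show 2*u/2 = u by omega,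
    show 2*c/2 = c by omega, show 2*F2/2 = F2 by omega, show 2*F2 - F2 = F2 by omega,
    show (2*(k'+1)-1+1)/2 = k'+1 by omega, show (2*(k'+1)-1)/2 = k' by omega,
    show (2*(k'+1)+1)/2 = k'+1 by omega, show (2*(k'+1))/2 = k'+1 by omega,
    show 2*(k'+1)-2 = 2*k' by omega]
  ring


section Main

variable {p q : ℕ} {lam : Nat.Partition (p+q)} {N : ℕ}

/-- number of pairs of rows of each kind -/
def nOf (lam : Nat.Partition (p+q)) (T : SYD lam p q) : ℕ × ℕ → ℕ
  | (k, 0) => (Multiset.count (2*k-1) lam.parts - T.f (2*k-1))/2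
  | (k, 1) => T.f (2*k-1)/2
  | (k, 2) => Multiset.count (2*k) lam.parts/2
  | _ => 0

lemma lSum_eq (T : SYD lam p q)
    (h1 : ∀ i, Even i → 2 * T.f i = Multiset.count i lam.parts)
    (h2 : ∀ i, Odd i → Even (Multiset.count i lam.parts) ∧ Even (T.f i))
    (hN : p + q ≤ N) :
    ∑ j ∈ SS N, nOf lam T j • Ee j = degOf lam p q := by
  have hOdd : ∀ k, 1 ≤ k → Multiset.count (2*k-1) lam.parts % 2 = 0 ∧ T.f (2*k-1) % 2 = 0 := by
    intro k hk
    have := h2 (2*k-1) ⟨k-1, by omega⟩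
    constructor
    · exact Nat.even_iff.1 this.1
    · exact Nat.even_iff.1 this.2
  have hEven : ∀ k, Multiset.count (2*k) lam.parts = 2 * T.f (2*k) :=
    fun k => (h1 (2*k) ⟨k, by ring⟩).symm
  ext v
  match v with
  | Sum.inl i =>
      rw [sumS_inl, degOf_inl]
      have step : ∀ k ∈ Finset.Icc 1 N,
          ((if 2*k-1 = i then 2*((nOf lam T (k,0)) + (nOf lam T (k,1))) else 0) +
            (if 2*k = i then 2*((nOf lam T (k,2))) else 0)) =
          ((if (2*k-1) = i then Multiset.count (2*k-1) lam.parts else 0) +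
            (if (2*k) = i then Multiset.count (2*k) lam.parts else 0)) := by
        intro k hk
        rw [Finset.mem_Icc] at hk
        congr 1
        · congr 1
          show 2*((Multiset.count (2*k-1) lam.parts - T.f (2*k-1))/2 + T.f (2*k-1)/2) = _
          exact arith_t _ _ (T.le_mult _) (hOdd k hk.1).1 (hOdd k hk.1).2
        · congr 1
          show 2*(Multiset.count (2*k) lam.parts/2) = _
          have := hEven k
          omega
      rw [Finset.sum_congr rfl step]
      rw [sum_parts lam N hN (fun i' => if i' = i then Multiset.count i' lam.parts else 0)
        (fun i' hi' => by simp [hi']), Finset.sum_ite_eq' lam.parts.toFinset]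
      split_ifs with h
      · rfl
      · rw [Multiset.mem_toFinset] at h
        exact (Multiset.count_eq_zero_of_notMem h).symm
  | Sum.inr true =>
      rw [sumS_a, degOf_a]
      have step : ∀ k ∈ Finset.Icc 1 N,
          (nOf lam T (k,0)) * (2*k-2) + (nOf lam T (k,1)) * (2*k) + (nOf lam T (k,2)) * (2*k) =
          (fun i' => T.f i' * ((i'+1)/2) + (Multiset.count i' lam.parts - T.f i') * (i'/2)) (2*k-1)
            + (fun i' => T.f i' * ((i'+1)/2) + (Multiset.count i' lam.parts - T.f i') * (i'/2)) (2*k) := by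
        intro k hk
        rw [Finset.mem_Icc] at hk
        exact arith_a k _ _ _ _ hk.1 (T.le_mult _) (hOdd k hk.1).1 (hOdd k hk.1).2 (hEven k)
      rw [Finset.sum_congr rfl step,
        sum_parts lam N hN
          (fun i' => T.f i' * ((i'+1)/2) + (Multiset.count i' lam.parts - T.f i') * (i'/2))
          (fun i' hi' => by
            have hf : T.f i' = 0 := Nat.le_zero.1 (hi' ▸ T.le_mult i')
            simp [hi', hf])]
      exact T.plus_eq
  | Sum.inr false =>
      rw [sumS_b, degOf_b]
      have step : ∀ k ∈ Finset.Icc 1 N,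
          (nOf lam T (k,0)) * (2*k) + (nOf lam T (k,1)) * (2*k-2) + (nOf lam T (k,2)) * (2*k) =
          (fun i' => T.f i' * (i'/2) + (Multiset.count i' lam.parts - T.f i') * ((i'+1)/2)) (2*k-1)
            + (fun i' => T.f i' * (i'/2) + (Multiset.count i' lam.parts - T.f i') * ((i'+1)/2)) (2*k) := by
        intro k hk
        rw [Finset.mem_Icc] at hk
        exact arith_b k _ _ _ _ hk.1 (T.le_mult _) (hOdd k hk.1).1 (hOdd k hk.1).2 (hEven k)
      rw [Finset.sum_congr rfl step,
        sum_parts lam N hN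
          (fun i' => T.f i' * (i'/2) + (Multiset.count i' lam.parts - T.f i') * ((i'+1)/2))
          (fun i' hi' => by
            have hf : T.f i' = 0 := Nat.le_zero.1 (hi' ▸ T.le_mult i')
            simp [hi', hf])]
      exact T.minus_eq

end Main

lemma arith_a' (k a b c : ℕ) (hk : 1 ≤ k) :
    ((2*b)*((2*k-1+1)/2) + ((2*(a+b)) - 2*b)*((2*k-1)/2)) +
      ((2*c/2)*((2*k+1)/2) + (2*c - 2*c/2)*((2*k)/2)) = a*(2*k-2) + b*(2*k) + c*(2*k) := by
  obtain ⟨k', rfl⟩ : ∃ k', k = k'+1 := ⟨k-1, by omega⟩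
  rw [show (2*(a+b)) - 2*b = 2*a by omega, show 2*c/2 = c by omega,
    show 2*c - c = c by omega, show (2*(k'+1)-1+1)/2 = k'+1 by omega,
    show (2*(k'+1)-1)/2 = k' by omega, show (2*(k'+1)+1)/2 = k'+1 by omega,
    show (2*(k'+1))/2 = k'+1 by omega, show 2*(k'+1)-2 = 2*k' by omega]
  ring

lemma arith_b' (k a b c : ℕ) (hk : 1 ≤ k) :
    ((2*b)*((2*k-1)/2) + ((2*(a+b)) - 2*b)*((2*k-1+1)/2)) +
      ((2*c/2)*((2*k)/2) + (2*c - 2*c/2)*((2*k+1)/2)) = a*(2*k) + b*(2*k-2) + c*(2*k) := by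
  obtain ⟨k', rfl⟩ : ∃ k', k = k'+1 := ⟨k-1, by omega⟩
  rw [show (2*(a+b)) - 2*b = 2*a by omega, show 2*c/2 = c by omega,
    show 2*c - c = c by omega, show (2*(k'+1)-1+1)/2 = k'+1 by omega,
    show (2*(k'+1)-1)/2 = k' by omega, show (2*(k'+1)+1)/2 = k'+1 by omega,
    show (2*(k'+1))/2 = k'+1 by omega, show 2*(k'+1)-2 = 2*k' by omega]
  ring

section Main2

variable {p q : ℕ} {lam : Nat.Partition (p+q)} {N : ℕ}

lemma SYD.ext' (T T' : SYD lam p q) (h : T.f = T'.f) : T = T' := by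
  cases T; cases T'; cases h; rfl

noncomputable def lOf (lam : Nat.Partition (p+q)) (N : ℕ) (T : SYD lam p q) :
    (ℕ × ℕ) →₀ (Var →₀ ℕ) :=
  Finsupp.onFinset (SS N) (fun j => if j ∈ SS N then nOf lam T j • Ee j else 0)
    (fun j h => by by_contra hc; simp [hc] at h)

lemma lOf_mem (T : SYD lam p q) (j : ℕ × ℕ) (hj : j ∈ SS N) :
    lOf lam N T j = nOf lam T j • Ee j := by
  simp only [lOf, Finsupp.onFinset_apply, if_pos hj]

lemma lOf_not_mem (T : SYD lam p q) (j : ℕ × ℕ) (hj : j ∉ SS N) : lOf lam N T j = 0 := by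
  simp only [lOf, Finsupp.onFinset_apply, if_neg hj]

/-- recover the factor multiplicities from `l` -/
def nl (l : (ℕ × ℕ) →₀ (Var →₀ ℕ)) : ℕ × ℕ → ℕ :=
  fun j => if j.2 = 2 then l j (Sum.inl (2*j.1)) / 2 else l j (Sum.inl (2*j.1-1)) / 2

lemma mem_SS {j : ℕ × ℕ} : j ∈ SS N ↔ (1 ≤ j.1 ∧ j.1 ≤ N) ∧ j.2 < 3 := by
  rw [SS, Finset.mem_product, Finset.mem_Icc, Finset.mem_range]

lemma l_eq (l : (ℕ × ℕ) →₀ (Var →₀ ℕ)) (HP : ∀ j ∈ SS N, ∃ n : ℕ, l j = n • Ee j)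
    (j : ℕ × ℕ) (hj : j ∈ SS N) : l j = nl l j • Ee j := by
  obtain ⟨n, hn⟩ := HP j hj
  obtain ⟨k, r⟩ := j
  have hr : r < 3 := (mem_SS.1 hj).2
  suffices h : nl l (k, r) = n by rw [hn, h]
  interval_cases r
  · simp only [nl]; rw [hn]; simp only [Finsupp.smul_apply, smul_eq_mul]
    rw [if_neg (by norm_num), Ee0_inl, if_pos rfl]
    omega
  · simp only [nl]; rw [hn]; simp only [Finsupp.smul_apply, smul_eq_mul]
    rw [if_neg (by norm_num), Ee1_inl, if_pos rfl]
    omega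
  · simp only [nl]; rw [hn]; simp only [Finsupp.smul_apply, smul_eq_mul]
    rw [if_true, Ee2_inl, if_pos rfl]
    omega

/-- the leading-`+` row counts recovered from `l` -/
def fOf (lam : Nat.Partition (p+q)) (l : (ℕ × ℕ) →₀ (Var →₀ ℕ)) : ℕ → ℕ :=
  fun i => if i % 2 = 1 then 2 * nl l ((i+1)/2, 1) else Multiset.count i lam.parts / 2

end Main2

lemma rhs_prod (N : ℕ) :
    (∏ k ∈ Finset.Icc 1 N,
      geomInv (va ^ (2 * k - 2) * vb ^ (2 * k) * vt (2 * k - 1) ^ 2) *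
        geomInv (va ^ (2 * k) * vb ^ (2 * k - 2) * vt (2 * k - 1) ^ 2) *
        geomInv (va ^ (2 * k) * vb ^ (2 * k) * vt (2 * k) ^ 2)) =
    ∏ j ∈ SS N, gs (Ee j) := by
  rw [SS, Finset.prod_product]
  refine Finset.prod_congr rfl fun k _ => ?_
  rw [show (3:ℕ) = 2+1 from rfl, Finset.prod_range_succ, Finset.prod_range_succ,
    Finset.prod_range_one]
  rw [prodX, prodX, prodX,
    show (Finsupp.single (Sum.inr true : Var) (2*k-2) + Finsupp.single (Sum.inr false) (2*k)
      + Finsupp.single (Sum.inl (2*k-1)) 2) = Ee (k,0) from rfl,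
    show (Finsupp.single (Sum.inr true : Var) (2*k) + Finsupp.single (Sum.inr false) (2*k-2)
      + Finsupp.single (Sum.inl (2*k-1)) 2) = Ee (k,1) from rfl,
    show (Finsupp.single (Sum.inr true : Var) (2*k) + Finsupp.single (Sum.inr false) (2*k)
      + Finsupp.single (Sum.inl (2*k)) 2) = Ee (k,2) from rfl,
    geomInv_monomial _ (Ee0_ne k), geomInv_monomial _ (Ee1_ne k), geomInv_monomial _ (Ee2_ne k)]

open scoped Classical in
lemma coeff_card (N : ℕ) (d : Var →₀ ℕ) :
    MvPowerSeries.coeff (R := ℤ) d (∏ j ∈ SS N, gs (Ee j)) =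
      (((Finset.finsuppAntidiag (SS N) d).filter
        (fun l => ∀ j ∈ SS N, ∃ n : ℕ, l j = n • Ee j)).card : ℤ) := by
  rw [MvPowerSeries.coeff_prod]
  have h1 : ∀ l ∈ Finset.finsuppAntidiag (SS N) d,
      (∏ j ∈ SS N, MvPowerSeries.coeff (R := ℤ) (l j) (gs (Ee j))) =
      if (∀ j ∈ SS N, ∃ n : ℕ, l j = n • Ee j) then (1:ℤ) else 0 := by
    intro l _
    rw [Finset.prod_congr rfl (fun j _ => coeff_gs (Ee j) (l j)), Finset.prod_boole]
  rw [Finset.sum_congr rfl h1, Finset.sum_boole]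

section Main3

variable {p q : ℕ} {lam : Nat.Partition (p+q)} {N : ℕ}

lemma count_big (hN : p + q ≤ N) (i : ℕ) (hi : N < i) : Multiset.count i lam.parts = 0 := by
  rw [Multiset.count_eq_zero]
  intro hmem
  have := mem_parts_le lam hmem
  omega

lemma exists_T (hN : p + q ≤ N) (l : (ℕ × ℕ) →₀ (Var →₀ ℕ))
    (Hsum : ∑ j ∈ SS N, l j = degOf lam p q) (Hsupp : l.support ⊆ SS N)
    (HP : ∀ j ∈ SS N, ∃ n : ℕ, l j = n • Ee j) :
    ∃ T : SYD lam p q,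
      ((∀ i, Even i → 2 * T.f i = Multiset.count i lam.parts) ∧
        ∀ i, Odd i → Even (Multiset.count i lam.parts) ∧ Even (T.f i)) ∧ lOf lam N T = l := by
  have Hsum' : ∑ j ∈ SS N, nl l j • Ee j = degOf lam p q := by
    rw [← Hsum]
    exact Finset.sum_congr rfl (fun j hj => (l_eq l HP j hj).symm)
  have Ct_odd : ∀ k, 1 ≤ k → k ≤ N →
      2*(nl l (k,0) + nl l (k,1)) = Multiset.count (2*k-1) lam.parts := by
    intro k h1 h2
    have h := DFunLike.congr_fun Hsum' (Sum.inl (2*k-1))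
    rwa [sumS_inl_odd N (nl l) k h1 h2, degOf_inl] at h
  have Ct_even : ∀ k, 1 ≤ k → k ≤ N →
      2*(nl l (k,2)) = Multiset.count (2*k) lam.parts := by
    intro k h1 h2
    have h := DFunLike.congr_fun Hsum' (Sum.inl (2*k))
    rwa [sumS_inl_even N (nl l) k h1 h2, degOf_inl] at h
  have Ca := DFunLike.congr_fun Hsum' (Sum.inr true)
  rw [sumS_a, degOf_a] at Ca
  have Cb := DFunLike.congr_fun Hsum' (Sum.inr false)
  rw [sumS_b, degOf_b] at Cb
  have Hzero : ∀ j, j ∉ SS N → l j = 0 :=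
    fun j hj => Finsupp.notMem_support_iff.1 (fun hc => hj (Hsupp hc))
  have nl_zero : ∀ k, N < k → nl l (k, 1) = 0 := by
    intro k hk
    have h0 : l (k,1) = 0 := Hzero _ (by rw [mem_SS]; push_neg; intro hh; omega)
    simp [nl, h0]
  have fodd : ∀ k, 1 ≤ k → fOf lam l (2*k-1) = 2 * nl l (k, 1) := by
    intro k hk
    rw [fOf, if_pos (by omega), show (2*k-1+1)/2 = k by omega]
  have feven : ∀ i, i % 2 = 0 → fOf lam l i = Multiset.count i lam.parts / 2 :=
    fun i hi => if_neg (by omega)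
  have le_mult : ∀ i, fOf lam l i ≤ Multiset.count i lam.parts := by
    intro i
    rcases Nat.even_or_odd i with he | ho
    · rw [feven i (Nat.even_iff.1 he)]
      exact Nat.div_le_self _ _
    · have h1 : i % 2 = 1 := Nat.odd_iff.1 ho
      have hik : 2*((i+1)/2)-1 = i := by omega
      have hk1 : 1 ≤ (i+1)/2 := by omega
      have hfi : fOf lam l i = 2 * nl l ((i+1)/2, 1) := by rw [fOf, if_pos h1]
      by_cases hkN : (i+1)/2 ≤ N
      · have hco := Ct_odd ((i+1)/2) hk1 hkN
        rw [hik] at hco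
        omega
      · rw [hfi, nl_zero _ (by omega)]
        omega
  have plus_eq : ∑ i ∈ lam.parts.toFinset,
      (fOf lam l i * ((i + 1) / 2) +
        (Multiset.count i lam.parts - fOf lam l i) * (i / 2)) = p := by
    have key : ∑ k ∈ Finset.Icc 1 N,
        ((fun i => fOf lam l i * ((i + 1) / 2) +
          (Multiset.count i lam.parts - fOf lam l i) * (i / 2)) (2*k-1) +
         (fun i => fOf lam l i * ((i + 1) / 2) +
          (Multiset.count i lam.parts - fOf lam l i) * (i / 2)) (2*k)) = p := by
      refine Eq.trans (Finset.sum_congr rfl fun k hk => ?_) Ca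
      rw [Finset.mem_Icc] at hk
      beta_reduce
      rw [fodd k hk.1, feven (2*k) (by omega), ← Ct_odd k hk.1 hk.2, ← Ct_even k hk.1 hk.2]
      exact arith_a' k _ _ _ hk.1
    exact (sum_parts lam N hN
      (fun i => fOf lam l i * ((i + 1) / 2) +
        (Multiset.count i lam.parts - fOf lam l i) * (i / 2))
      (fun i hi => by
        have h := le_mult i
        have hf : fOf lam l i = 0 := by omega
        simp [hi, hf])).symm.trans key
  have minus_eq : ∑ i ∈ lam.parts.toFinset,
      (fOf lam l i * (i / 2) +
        (Multiset.count i lam.parts - fOf lam l i) * ((i + 1) / 2)) = q := by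
    have key : ∑ k ∈ Finset.Icc 1 N,
        ((fun i => fOf lam l i * (i / 2) +
          (Multiset.count i lam.parts - fOf lam l i) * ((i + 1) / 2)) (2*k-1) +
         (fun i => fOf lam l i * (i / 2) +
          (Multiset.count i lam.parts - fOf lam l i) * ((i + 1) / 2)) (2*k)) = q := by
      refine Eq.trans (Finset.sum_congr rfl fun k hk => ?_) Cb
      rw [Finset.mem_Icc] at hk
      beta_reduce
      rw [fodd k hk.1, feven (2*k) (by omega), ← Ct_odd k hk.1 hk.2, ← Ct_even k hk.1 hk.2]
      exact arith_b' k _ _ _ hk.1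
    exact (sum_parts lam N hN
      (fun i => fOf lam l i * (i / 2) +
        (Multiset.count i lam.parts - fOf lam l i) * ((i + 1) / 2))
      (fun i hi => by
        have h := le_mult i
        have hf : fOf lam l i = 0 := by omega
        simp [hi, hf])).symm.trans key
  refine ⟨⟨fOf lam l, le_mult, plus_eq, minus_eq⟩, ⟨?_, ?_⟩, ?_⟩
  · intro i hi
    have h2 : i % 2 = 0 := Nat.even_iff.1 hi
    show 2 * fOf lam l i = _
    rw [feven i h2]
    rcases Nat.eq_zero_or_pos i with rfl | hpos
    · simp [count_zero_parts]
    · by_cases hkN : i/2 ≤ N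
      · have := Ct_even (i/2) (by omega) hkN
        rw [show 2*(i/2) = i by omega] at this
        omega
      · rw [count_big hN i (by omega)]
  · intro i hi
    have h1 : i % 2 = 1 := Nat.odd_iff.1 hi
    have hik : 2*((i+1)/2)-1 = i := by omega
    have hk1 : 1 ≤ (i+1)/2 := by omega
    have hfi : fOf lam l i = 2 * nl l ((i+1)/2, 1) := by rw [fOf, if_pos h1]
    constructor
    · by_cases hkN : (i+1)/2 ≤ N
      · have hco := Ct_odd _ hk1 hkN
        rw [hik] at hco
        exact ⟨nl l ((i+1)/2,0) + nl l ((i+1)/2,1), by omega⟩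
      · rw [count_big hN i (by omega)]
        exact Even.zero
    · show Even (fOf lam l i)
      rw [hfi]
      exact ⟨nl l ((i+1)/2,1), by ring⟩
  · apply Finsupp.ext
    intro j
    by_cases hj : j ∈ SS N
    · rw [lOf_mem _ _ hj, l_eq l HP j hj]
      obtain ⟨k, r⟩ := j
      have hkr := mem_SS.1 hj
      have hr := hkr.2
      have hk1 := hkr.1.1
      have hkN := hkr.1.2
      congr 1
      interval_cases r
      · show (Multiset.count (2*k-1) lam.parts - fOf lam l (2*k-1))/2 = nl l (k,0)
        rw [fodd k hk1, ← Ct_odd k hk1 hkN]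
        omega
      · show fOf lam l (2*k-1) / 2 = nl l (k,1)
        rw [fodd k hk1]
        omega
      · show Multiset.count (2*k) lam.parts / 2 = nl l (k,2)
        rw [← Ct_even k hk1 hkN]
        omega
    · rw [lOf_not_mem _ _ hj, Hzero j hj]

end Main3

section Main4

variable {p q : ℕ} {lam : Nat.Partition (p+q)} {N : ℕ}

lemma lOf_mem_filter (hN : p + q ≤ N) (T : SYD lam p q)
    (h1 : ∀ i, Even i → 2 * T.f i = Multiset.count i lam.parts)
    (h2 : ∀ i, Odd i → Even (Multiset.count i lam.parts) ∧ Even (T.f i)) :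
    lOf lam N T ∈ Finset.finsuppAntidiag (SS N) (degOf lam p q) ∧
      ∀ j ∈ SS N, ∃ n : ℕ, lOf lam N T j = n • Ee j := by
  refine ⟨Finset.mem_finsuppAntidiag.2 ⟨?_, Finsupp.support_onFinset_subset⟩,
    fun j hj => ⟨nOf lam T j, lOf_mem T j hj⟩⟩
  exact (Finset.sum_congr rfl (fun j hj => lOf_mem T j hj)).trans (lSum_eq T h1 h2 hN)

lemma lOf_inj (hN : p + q ≤ N) (T T' : SYD lam p q)
    (h1 : ∀ i, Even i → 2 * T.f i = Multiset.count i lam.parts)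
    (h2 : ∀ i, Odd i → Even (Multiset.count i lam.parts) ∧ Even (T.f i))
    (h1' : ∀ i, Even i → 2 * T'.f i = Multiset.count i lam.parts)
    (h2' : ∀ i, Odd i → Even (Multiset.count i lam.parts) ∧ Even (T'.f i))
    (h : lOf lam N T = lOf lam N T') : T = T' := by
  apply SYD.ext'
  funext i
  rcases Nat.even_or_odd i with he | ho
  · have e1 := h1 i he
    have e2 := h1' i he
    omega
  · have hodd1 : i % 2 = 1 := Nat.odd_iff.1 ho
    have hk1 : 1 ≤ (i+1)/2 := by omega
    have hik : 2*((i+1)/2)-1 = i := by omega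
    by_cases hkN : (i+1)/2 ≤ N
    · have hj : ((i+1)/2, 1) ∈ SS N := mem_SS.2 ⟨⟨hk1, hkN⟩, by norm_num⟩
      have hl := DFunLike.congr_fun h ((i+1)/2, 1)
      rw [lOf_mem T _ hj, lOf_mem T' _ hj] at hl
      have hv := DFunLike.congr_fun hl (Sum.inl i)
      simp only [Finsupp.smul_apply, smul_eq_mul, Ee1_inl] at hv
      rw [if_pos hik] at hv
      have e1 : nOf lam T ((i+1)/2,1) = T.f (2*((i+1)/2)-1)/2 := rfl
      have e2 : nOf lam T' ((i+1)/2,1) = T'.f (2*((i+1)/2)-1)/2 := rfl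
      rw [e1, e2, hik] at hv
      have ev1 := Nat.even_iff.1 (h2 i ho).2
      have ev2 := Nat.even_iff.1 (h2' i ho).2
      omega
    · have hc : Multiset.count i lam.parts = 0 := count_big hN i (by omega)
      have u1 := T.le_mult i
      have u2 := T'.le_mult i
      omega

end Main4

/-- Generating function for the number of signed Young diagrams of type CII:
`p` and `q` are even, and `syd_CII(λ;p,q)` consists of the `T ∈ syd(λ;p,q)` with
`m_T⁺(i) = m(i)/2` for every even part length `i`, and `m(i)` and `m_T⁺(i)` even
for every odd part length `i`. -/
theorem stmt3 (p q : ℕ) (hp : Even p) (hq : Even q) (lam : Nat.Partition (p + q))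
    (N : ℕ) (hN : p + q ≤ N) :
    (Nat.card {T : SYD lam p q //
        (∀ i, Even i → 2 * T.f i = Multiset.count i lam.parts) ∧
          ∀ i, Odd i → Even (Multiset.count i lam.parts) ∧ Even (T.f i)} : ℤ) =
      MvPowerSeries.coeff (R := ℤ) (degOf lam p q)
        (∏ k ∈ Finset.Icc 1 N,
          geomInv (va ^ (2 * k - 2) * vb ^ (2 * k) * vt (2 * k - 1) ^ 2) *
            geomInv (va ^ (2 * k) * vb ^ (2 * k - 2) * vt (2 * k - 1) ^ 2) *
            geomInv (va ^ (2 * k) * vb ^ (2 * k) * vt (2 * k) ^ 2)) := by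
  classical
  rw [rhs_prod N, coeff_card N (degOf lam p q), Nat.cast_inj]
  rw [← Nat.card_eq_finsetCard]
  refine Nat.card_congr (Equiv.ofBijective
    (fun T => ⟨lOf lam N T.1, Finset.mem_filter.2
      ⟨(lOf_mem_filter hN T.1 T.2.1 T.2.2).1, (lOf_mem_filter hN T.1 T.2.1 T.2.2).2⟩⟩) ?_)
  constructor
  · rintro ⟨T, hT⟩ ⟨T', hT'⟩ hEq
    rw [Subtype.mk.injEq] at hEq
    exact Subtype.ext (lOf_inj hN T T' hT.1 hT.2 hT'.1 hT'.2 hEq)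
  · rintro ⟨l, hl⟩
    rw [Finset.mem_filter, Finset.mem_finsuppAntidiag] at hl
    obtain ⟨⟨hsum, hsupp⟩, hP⟩ := hl
    obtain ⟨T, hconds, hT⟩ := exists_T hN l hsum hsupp hP
    exact ⟨⟨T, hconds⟩, Subtype.ext hT⟩
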